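/- Let f : ℝ → ℝ be continuous, bounded, and integrable. Define g(x) = (1/2)∫_ℝ e^{−|x−y|} f(y) dy. Then g is twice differentiable on ℝ, with g'(x) = −(1/2)∫_ℝ sign(x−y) e^{−|x−y|} f(y) dy, and g''(x) = g(x) − f(x) for every x ∈ ℝ. -/
import Mathlib

open MeasureTheory Real

noncomputable section

/-- `g = p * f` where `p(x) = (1/2) e^{-|x|}`. -/
def convP (f : ℝ → ℝ) (x : ℝ) : ℝ := (1 / 2) * ∫ y : ℝ, Real.exp (-|x - y|) * f y

/-- The candidate first derivative of `g = p * f`. -/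
def convP' (f : ℝ → ℝ) (x : ℝ) : ℝ :=
  -(1 / 2) * ∫ y : ℝ, Real.sign (x - y) * Real.exp (-|x - y|) * f y

open Set intervalIntegral

lemma measurable_realSign : Measurable Real.sign := by
  have : Real.sign = fun r : ℝ => if r < 0 then (-1 : ℝ) else if 0 < r then 1 else 0 := by
    funext r; rfl
  rw [this]
  exact Measurable.ite (measurableSet_lt measurable_id measurable_const) measurable_const
    (Measurable.ite (measurableSet_lt measurable_const measurable_id) measurable_const
      measurable_const)

lemma abs_realSign (r : ℝ) : |Real.sign r| ≤ 1 := by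
  rcases lt_trichotomy r 0 with h | h | h
  · rw [Real.sign_of_neg h]; norm_num
  · rw [h, Real.sign_zero]; norm_num
  · rw [Real.sign_of_pos h]; norm_num

lemma integral_Ici_sub_Ici {h : ℝ → ℝ} {a b : ℝ}
    (ha : IntegrableOn h (Ici a)) (hb : IntegrableOn h (Ici b)) :
    (∫ x in Ici a, h x) - ∫ x in Ici b, h x = ∫ x in a..b, h x := by
  wlog hab : a ≤ b generalizing a b
  · rw [intervalIntegral.integral_symm, ← this hb ha (le_of_not_ge hab), neg_sub]
  rw [integral_Ici_eq_integral_Ioi, integral_Ici_eq_integral_Ioi,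
    sub_eq_iff_eq_add, integral_of_le hab,
    ← setIntegral_union (Ioc_disjoint_Ioi le_rfl) measurableSet_Ioi
      ((ha.mono_set Ioi_subset_Ici_self).mono_set Ioc_subset_Ioi_self)
      (hb.mono_set Ioi_subset_Ici_self), Ioc_union_Ioi_eq_Ioi hab]

section main

variable {f : ℝ → ℝ}

lemma intA (hc : Continuous f) (hi : Integrable f (volume : Measure ℝ)) (x : ℝ) : IntegrableOn (fun y => Real.exp y * f y) (Iic x) volume := by
  apply Integrable.mono' ((hi.norm.const_mul (Real.exp x)).integrableOn)
  · exact ((Real.continuous_exp.mul hc).aestronglyMeasurable).restrict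
  · filter_upwards [ae_restrict_mem measurableSet_Iic] with y hy
    rw [norm_mul, Real.norm_eq_abs, Real.norm_eq_abs, abs_of_pos (Real.exp_pos y)]
    exact mul_le_mul_of_nonneg_right (Real.exp_le_exp.2 hy) (abs_nonneg _)

lemma intB (hc : Continuous f) (hi : Integrable f (volume : Measure ℝ)) (x : ℝ) : IntegrableOn (fun y => Real.exp (-y) * f y) (Ici x) volume := by
  apply Integrable.mono' ((hi.norm.const_mul (Real.exp (-x))).integrableOn)
  · exact ((Real.continuous_exp.comp continuous_neg).mul hc).aestronglyMeasurable.restrict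
  · filter_upwards [ae_restrict_mem measurableSet_Ici] with y hy
    rw [norm_mul, Real.norm_eq_abs, Real.norm_eq_abs, abs_of_pos (Real.exp_pos _)]
    exact mul_le_mul_of_nonneg_right (Real.exp_le_exp.2 (neg_le_neg hy)) (abs_nonneg _)

/-- The left tail integral. -/
def Af (f : ℝ → ℝ) (x : ℝ) : ℝ := ∫ y in Iic x, Real.exp y * f y

/-- The right tail integral. -/
def Bf (f : ℝ → ℝ) (x : ℝ) : ℝ := ∫ y in Ici x, Real.exp (-y) * f y

lemma hasDerivAt_Af (hc : Continuous f) (hi : Integrable f (volume : Measure ℝ)) (x : ℝ) : HasDerivAt (Af f) (Real.exp x * f x) x := by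
  have key : Af f = fun u => Af f 0 + ∫ t in (0:ℝ)..u, Real.exp t * f t := by
    funext u
    have := integral_Iic_sub_Iic (intA hc hi 0) (intA hc hi u)
    unfold Af; linarith
  rw [key]
  have hcont : Continuous fun t => Real.exp t * f t := Real.continuous_exp.mul hc
  exact (integral_hasDerivAt_right (hcont.intervalIntegrable 0 x)
    (hcont.stronglyMeasurableAtFilter _ _) hcont.continuousAt).const_add _

lemma hasDerivAt_Bf (hc : Continuous f) (hi : Integrable f (volume : Measure ℝ)) (x : ℝ) : HasDerivAt (Bf f) (-(Real.exp (-x) * f x)) x := by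
  have key : Bf f = fun u => Bf f 0 - ∫ t in (0:ℝ)..u, Real.exp (-t) * f t := by
    funext u
    have := integral_Ici_sub_Ici (intB hc hi 0) (intB hc hi u)
    unfold Bf; linarith
  rw [key]
  have hcont : Continuous fun t => Real.exp (-t) * f t :=
    (Real.continuous_exp.comp continuous_neg).mul hc
  exact (integral_hasDerivAt_right (hcont.intervalIntegrable 0 x)
    (hcont.stronglyMeasurableAtFilter _ _) hcont.continuousAt).const_sub _

lemma intK (hc : Continuous f) (hi : Integrable f (volume : Measure ℝ)) (x : ℝ) : Integrable (fun y => Real.exp (-|x - y|) * f y) volume := by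
  apply Integrable.mono' hi.norm
  · exact ((Real.continuous_exp.comp (continuous_const.sub continuous_id).abs.neg).mul
      hc).aestronglyMeasurable
  · filter_upwards with y
    rw [norm_mul, Real.norm_eq_abs, Real.norm_eq_abs, abs_of_pos (Real.exp_pos _)]
    calc Real.exp (-|x - y|) * |f y| ≤ 1 * |f y| := by
          apply mul_le_mul_of_nonneg_right _ (abs_nonneg _)
          rw [← Real.exp_zero]
          exact Real.exp_le_exp.2 (neg_nonpos_of_nonneg (abs_nonneg _))
      _ = ‖f y‖ := by rw [one_mul, Real.norm_eq_abs]

lemma intS (hc : Continuous f) (hi : Integrable f (volume : Measure ℝ)) (x : ℝ) :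
    Integrable (fun y => Real.sign (x - y) * Real.exp (-|x - y|) * f y) volume := by
  apply Integrable.mono' hi.norm
  · apply AEStronglyMeasurable.mul _ hc.aestronglyMeasurable
    apply Measurable.aestronglyMeasurable
    exact (measurable_realSign.comp (measurable_const.sub measurable_id)).mul
      ((Real.measurable_exp.comp (measurable_const.sub measurable_id).abs.neg))
  · filter_upwards with y
    rw [norm_mul, norm_mul, Real.norm_eq_abs, Real.norm_eq_abs, Real.norm_eq_abs,
      abs_of_pos (Real.exp_pos _)]
    calc |Real.sign (x - y)| * Real.exp (-|x - y|) * |f y| ≤ 1 * 1 * |f y| := by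
          apply mul_le_mul_of_nonneg_right _ (abs_nonneg _)
          apply mul_le_mul (abs_realSign _) _ (Real.exp_pos _).le zero_le_one
          rw [← Real.exp_zero]
          exact Real.exp_le_exp.2 (neg_nonpos_of_nonneg (abs_nonneg _))
      _ = ‖f y‖ := by rw [one_mul, one_mul, Real.norm_eq_abs]

lemma convP_eq (hc : Continuous f) (hi : Integrable f (volume : Measure ℝ)) (x : ℝ) :
    convP f x = (1 / 2) * (Real.exp (-x) * Af f x + Real.exp x * Bf f x) := by
  unfold convP Af Bf
  congr 1
  rw [← integral_Iic_add_Ioi ((intK hc hi x).integrableOn) ((intK hc hi x).integrableOn)]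
  congr 1
  · rw [← MeasureTheory.integral_const_mul]
    apply setIntegral_congr_fun measurableSet_Iic
    intro y hy
    simp only
    rw [abs_of_nonneg (by simp only [mem_Iic] at hy; linarith), ← mul_assoc,
      ← Real.exp_add]
    ring_nf
  · rw [integral_Ici_eq_integral_Ioi.symm, ← MeasureTheory.integral_const_mul]
    apply setIntegral_congr_fun measurableSet_Ici
    intro y hy
    simp only
    rw [abs_of_nonpos (by simp only [mem_Ici] at hy; linarith), ← mul_assoc,
      ← Real.exp_add]
    ring_nf

lemma convP'_eq (hc : Continuous f) (hi : Integrable f (volume : Measure ℝ)) (x : ℝ) :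
    convP' f x = (1 / 2) * (Real.exp x * Bf f x - Real.exp (-x) * Af f x) := by
  unfold convP' Af Bf
  rw [← integral_Iic_add_Ioi ((intS hc hi x).integrableOn) ((intS hc hi x).integrableOn)]
  have h1 : (∫ y in Iic x, Real.sign (x - y) * Real.exp (-|x - y|) * f y) =
      Real.exp (-x) * ∫ y in Iic x, Real.exp y * f y := by
    rw [integral_Iic_eq_integral_Iio, integral_Iic_eq_integral_Iio, ← MeasureTheory.integral_const_mul]
    apply setIntegral_congr_fun measurableSet_Iio
    intro y hy
    simp only [mem_Iio] at hy
    simp only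
    rw [Real.sign_of_pos (by linarith : (0:ℝ) < x - y), abs_of_nonneg (by linarith), one_mul,
      ← mul_assoc, ← Real.exp_add]
    ring_nf
  have h2 : (∫ y in Ioi x, Real.sign (x - y) * Real.exp (-|x - y|) * f y) =
      -(Real.exp x * ∫ y in Ici x, Real.exp (-y) * f y) := by
    rw [integral_Ici_eq_integral_Ioi, ← MeasureTheory.integral_const_mul, ← MeasureTheory.integral_neg]
    apply setIntegral_congr_fun measurableSet_Ioi
    intro y hy
    simp only [mem_Ioi] at hy
    simp only
    rw [Real.sign_of_neg (by linarith : x - y < 0), abs_of_nonpos (by linarith)]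
    rw [neg_mul, ← mul_assoc, ← Real.exp_add]
    ring_nf
  rw [h1, h2]
  ring

end main

/-- If `f` is continuous, bounded and integrable, then `g = p * f` is twice
differentiable with `g'` given by the sign-kernel formula and `g'' = g − f`;
i.e. `(1 − ∂_x²)(p * f) = f`. -/
theorem stmt_15 (f : ℝ → ℝ) (hc : Continuous f) (hb : ∃ M : ℝ, ∀ x : ℝ, |f x| ≤ M)
    (hi : Integrable f (volume : Measure ℝ)) :
    (∀ x : ℝ, HasDerivAt (convP f) (convP' f x) x) ∧
    (∀ x : ℝ, HasDerivAt (convP' f) (convP f x - f x) x) := by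
  have hEneg : ∀ x : ℝ, HasDerivAt (fun u : ℝ => Real.exp (-u)) (-Real.exp (-x)) x := by
    intro x
    simpa using (hasDerivAt_neg x).exp
  have hE : ∀ x : ℝ, HasDerivAt (fun u : ℝ => Real.exp u) (Real.exp x) x :=
    fun x => Real.hasDerivAt_exp x
  constructor
  · intro x
    have hG : HasDerivAt (fun u => (1 / 2 : ℝ) * (Real.exp (-u) * Af f u + Real.exp u * Bf f u))
        ((1 / 2 : ℝ) * ((-Real.exp (-x)) * Af f x + Real.exp (-x) * (Real.exp x * f x) +
          (Real.exp x * Bf f x + Real.exp x * (-(Real.exp (-x) * f x))))) x := by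
      exact (((hEneg x).mul (hasDerivAt_Af hc hi x)).add
        ((hE x).mul (hasDerivAt_Bf hc hi x))).const_mul _
    have hfun : convP f = fun u => (1 / 2 : ℝ) * (Real.exp (-u) * Af f u + Real.exp u * Bf f u) :=
      funext fun u => convP_eq hc hi u
    rw [hfun, convP'_eq hc hi x]
    convert hG using 1
    ring
  · intro x
    have hG : HasDerivAt (fun u => (1 / 2 : ℝ) * (Real.exp u * Bf f u - Real.exp (-u) * Af f u))
        ((1 / 2 : ℝ) * ((Real.exp x * Bf f x + Real.exp x * (-(Real.exp (-x) * f x))) -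
          ((-Real.exp (-x)) * Af f x + Real.exp (-x) * (Real.exp x * f x)))) x := by
      exact (((hE x).mul (hasDerivAt_Bf hc hi x)).sub
        ((hEneg x).mul (hasDerivAt_Af hc hi x))).const_mul _
    have hfun : convP' f = fun u =>
        (1 / 2 : ℝ) * (Real.exp u * Bf f u - Real.exp (-u) * Af f u) :=
      funext fun u => convP'_eq hc hi u
    rw [hfun, convP_eq hc hi x]
    convert hG using 1
    have h : Real.exp (-x) * Real.exp x = 1 := by rw [← Real.exp_add]; simp
    linear_combination f x * h
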